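/- arXiv:hep-th/0107236 — 3 statements merged into one kernel-verified Lean document; each statement's English description precedes it below -/
import Mathlib

section
/- Let A, B, C be pairwise strongly commuting self-adjoint operators on a Hilbert space, and let X be a two-dimensional linear subspace of ℝ³ that does not contain the z-axis. If the joint spectrum σ_{A,B,C} is contained in X, then C is a linear function of A and B; i.e., there exist real constants a, b such that C = aA + bB (equivalently, the spectral measure of C is the pushforward of the joint spectral measure of (A,B) under the linear map (x,y) ↦ ax + by). -/
open scoped InnerProductSpace

/-- A projection-valued measure on a measurable space `α`, acting on a complex
Hilbert space `H`.  `E S` is the spectral projection associated with `S`. -/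
structure PVM (α : Type*) [MeasurableSpace α] (H : Type*) [NormedAddCommGroup H]
    [InnerProductSpace ℂ H] where
  E : Set α → H →L[ℂ] H
  selfAdjoint : ∀ S : Set α, MeasurableSet S → ∀ x y : H,
    @inner ℂ H _ (E S x) y = @inner ℂ H _ x (E S y)
  mul_inter : ∀ S T : Set α, MeasurableSet S → MeasurableSet T →
    (E S).comp (E T) = E (S ∩ T)
  empty : E ∅ = 0
  univ : E Set.univ = 1
  countably_additive : ∀ s : ℕ → Set α, (∀ n, MeasurableSet (s n)) →
    Pairwise (Function.onFun Disjoint s) → ∀ x y : H,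
    HasSum (fun n => @inner ℂ H _ x (E (s n) y)) (@inner ℂ H _ x (E (⋃ n, s n) y))

/-- The support (joint spectrum) of a projection-valued measure: the set of points each
of whose neighbourhoods carries a nonzero spectral projection. -/
def PVM.support {α : Type*} [MeasurableSpace α] [PseudoMetricSpace α] {H : Type*}
    [NormedAddCommGroup H] [InnerProductSpace ℂ H] (P : PVM α H) : Set α :=
  {a | ∀ ε > 0, P.E (Metric.ball a ε) ≠ 0}

section Helpers

variable {α : Type*} [MeasurableSpace α] {H : Type*} [NormedAddCommGroup H]
    [InnerProductSpace ℂ H]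

/-- A projection of a measurable subset of a null set is null. -/
lemma PVM.null_mono (P : PVM α H) {S N : Set α} (hS : MeasurableSet S)
    (hN : MeasurableSet N) (hSN : S ⊆ N) (h : P.E N = 0) : P.E S = 0 := by
  have h1 := P.mul_inter S N hS hN
  rw [Set.inter_eq_left.mpr hSN] at h1
  rw [← h1, h, ContinuousLinearMap.comp_zero]

/-- A countable union of null sets is null. -/
lemma PVM.null_iUnion (P : PVM α H) (s : ℕ → Set α)
    (hm : ∀ n, MeasurableSet (s n)) (hz : ∀ n, P.E (s n) = 0) :
    P.E (⋃ n, s n) = 0 := by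
  have key : ∀ x y : H, ⟪x, P.E (⋃ n, s n) y⟫_ℂ = 0 := by
    intro x y
    have hmd : ∀ n, MeasurableSet (disjointed s n) := MeasurableSet.disjointed hm
    have hzd : ∀ n, P.E (disjointed s n) = 0 := fun n =>
      P.null_mono (hmd n) (hm n) (disjointed_subset s n) (hz n)
    have h1 := P.countably_additive (disjointed s) hmd (disjoint_disjointed s) x y
    rw [iUnion_disjointed] at h1
    have h2 : HasSum (fun n => ⟪x, P.E (disjointed s n) y⟫_ℂ) 0 := by
      convert hasSum_zero with n
      rw [hzd n]
      simp
    exact h1.unique h2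
  ext y
  have h := key (P.E (⋃ n, s n) y) y
  simpa [inner_self_eq_zero] using h

/-- If the complement of a measurable set is null, its projection is the identity. -/
lemma PVM.eq_one_of_compl_null (P : PVM α H) {N : Set α} (hN : MeasurableSet N)
    (hc : P.E Nᶜ = 0) : P.E N = 1 := by
  set s : ℕ → Set α := fun n => if n = 0 then N else if n = 1 then Nᶜ else ∅ with hs
  have hm : ∀ n, MeasurableSet (s n) := by
    intro n
    rcases n with _ | _ | n <;> simp [s, hN, hN.compl]
  have hd : Pairwise (Function.onFun Disjoint s) := by
    intro i j hij
    rcases i with _ | _ | i <;> rcases j with _ | _ | j <;>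
      simp_all [Function.onFun, s, disjoint_compl_right, disjoint_compl_left]
  have hu : ⋃ n, s n = Set.univ := by
    apply Set.eq_univ_of_forall
    intro p
    by_cases hp : p ∈ N
    · exact Set.mem_iUnion.mpr ⟨0, by simpa [s] using hp⟩
    · exact Set.mem_iUnion.mpr ⟨1, by simpa [s] using hp⟩
  have key : ∀ x y : H, ⟪x, P.E N y⟫_ℂ = ⟪x, y⟫_ℂ := by
    intro x y
    have h1 := P.countably_additive s hm hd x y
    rw [hu, P.univ] at h1
    have h2 : HasSum (fun n => ⟪x, P.E (s n) y⟫_ℂ) ⟪x, P.E (s 0) y⟫_ℂ := by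
      apply hasSum_single 0
      intro b hb
      rcases b with _ | _ | b
      · exact absurd rfl hb
      · simp [s, hc]
      · simp [s, P.empty]
    have h0 : s 0 = N := by simp [s]
    rw [h0] at h2
    have := (h1.unique h2).symm
    simpa using this
  ext y
  have h := key (P.E N y - y) y
  have h2 : ⟪P.E N y - y, P.E N y - y⟫_ℂ = 0 := by
    rw [inner_sub_right, h, sub_self]
  have h3 : P.E N y - y = 0 := inner_self_eq_zero.mp h2
  simpa [sub_eq_zero] using h3

end Helpers

/-- A two-dimensional subspace of `ℝ³` not containing the `z`-axis is the graph of a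
linear function of the first two coordinates. -/
lemma graph_of_plane (X : Submodule ℝ (Fin 3 → ℝ))
    (hdim : Module.finrank ℝ X = 2)
    (hz : (Pi.single 2 1 : Fin 3 → ℝ) ∉ X) :
    ∃ a b : ℝ, ∀ p ∈ X, p 2 = a * p 0 + b * p 1 := by
  have key : ∀ p ∈ X, p 0 = 0 → p 1 = 0 → p 2 = 0 := by
    intro p hp h0 h1
    by_contra h2
    apply hz
    have hps : (Pi.single 2 1 : Fin 3 → ℝ) = (p 2)⁻¹ • p := by
      funext i
      fin_cases i <;>
        simp [Pi.single_apply, h0, h1, inv_mul_cancel₀ h2]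
    rw [hps]
    exact X.smul_mem _ hp
  set π : X →ₗ[ℝ] (Fin 2 → ℝ) :=
    (LinearMap.pi (fun i : Fin 2 => LinearMap.proj (R := ℝ) (φ := fun _ : Fin 3 => ℝ)
      (Fin.castSucc i))).domRestrict X with hπ
  have hπval : ∀ (p : X) (i : Fin 2), π p i = (p : Fin 3 → ℝ) (Fin.castSucc i) := by
    intro p i
    rfl
  have hinj : Function.Injective π := by
    intro p q hpq
    have hd : ∀ i : Fin 2, (p : Fin 3 → ℝ) (Fin.castSucc i) = (q : Fin 3 → ℝ) (Fin.castSucc i) := by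
      intro i
      rw [← hπval, ← hπval, hpq]
    have hm : ((p : Fin 3 → ℝ) - (q : Fin 3 → ℝ)) ∈ X := X.sub_mem p.2 q.2
    have h0 : ((p : Fin 3 → ℝ) - q) 0 = 0 := by
      have := hd 0; simp only [Pi.sub_apply]; rw [show ((0:Fin 3)) = Fin.castSucc 0 from rfl]
      rw [this]; ring
    have h1 : ((p : Fin 3 → ℝ) - q) 1 = 0 := by
      have := hd 1; simp only [Pi.sub_apply]; rw [show ((1:Fin 3)) = Fin.castSucc 1 from rfl]
      rw [this]; ring
    have h2 := key _ hm h0 h1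
    apply Subtype.ext
    funext i
    fin_cases i
    · simpa [sub_eq_zero] using h0
    · simpa [sub_eq_zero] using h1
    · simpa [sub_eq_zero] using h2
  have hfd : FiniteDimensional ℝ X := FiniteDimensional.finiteDimensional_submodule X
  have hrk : Module.finrank ℝ X = Module.finrank ℝ (Fin 2 → ℝ) := by
    simp [hdim]
  have hsurj : Function.Surjective π :=
    (LinearMap.injective_iff_surjective_of_finrank_eq_finrank hrk).mp hinj
  obtain ⟨u, hu⟩ := hsurj (Pi.single 0 1)
  obtain ⟨v, hv⟩ := hsurj (Pi.single 1 1)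
  have hu0 : (u : Fin 3 → ℝ) 0 = 1 := by
    have := congrFun hu 0
    rw [hπval] at this
    simpa using this
  have hu1 : (u : Fin 3 → ℝ) 1 = 0 := by
    have := congrFun hu 1
    rw [hπval] at this
    simpa [Pi.single_apply] using this
  have hv0 : (v : Fin 3 → ℝ) 0 = 0 := by
    have := congrFun hv 0
    rw [hπval] at this
    simpa [Pi.single_apply] using this
  have hv1 : (v : Fin 3 → ℝ) 1 = 1 := by
    have := congrFun hv 1
    rw [hπval] at this
    simpa using this
  refine ⟨(u : Fin 3 → ℝ) 2, (v : Fin 3 → ℝ) 2, fun p hp => ?_⟩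
  set q : Fin 3 → ℝ := p - p 0 • (u : Fin 3 → ℝ) - p 1 • (v : Fin 3 → ℝ) with hq
  have hqX : q ∈ X := X.sub_mem (X.sub_mem hp (X.smul_mem _ u.2)) (X.smul_mem _ v.2)
  have hq0 : q 0 = 0 := by simp [hq, hu0, hv0]
  have hq1 : q 1 = 0 := by simp [hq, hu1, hv1]
  have hq2 := key q hqX hq0 hq1
  have : p 2 - p 0 * (u : Fin 3 → ℝ) 2 - p 1 * (v : Fin 3 → ℝ) 2 = 0 := by
    simpa [hq] using hq2
  linarith

/-- If the joint spectrum of three strongly commuting self-adjoint operators `A, B, C`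
(described by their joint spectral measure `P` on `ℝ³`) is contained in a two-dimensional
subspace `X` of `ℝ³` not containing the `z`-axis, then `C = aA + bB` for some reals
`a, b`, in the sense that the spectral measure of `C` (the third marginal of `P`) is the
pushforward of the joint spectral measure of `(A,B)` under `(x,y) ↦ ax + by`. -/
theorem linear_dependence_of_jointSpectrum_subset_plane
    {H : Type*} [NormedAddCommGroup H] [InnerProductSpace ℂ H] [CompleteSpace H]
    (P : PVM (Fin 3 → ℝ) H) (X : Submodule ℝ (Fin 3 → ℝ))
    (hdim : Module.finrank ℝ X = 2)
    (hzaxis : (Pi.single 2 1 : Fin 3 → ℝ) ∉ X)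
    (hsupp : P.support ⊆ (X : Set (Fin 3 → ℝ))) :
    ∃ a b : ℝ, ∀ I : Set ℝ, MeasurableSet I →
      P.E {p : Fin 3 → ℝ | p 2 ∈ I} = P.E {p : Fin 3 → ℝ | a * p 0 + b * p 1 ∈ I} := by
  obtain ⟨a, b, hab⟩ := graph_of_plane X hdim hzaxis
  -- X is closed, hence measurable
  have hXclosed : IsClosed (X : Set (Fin 3 → ℝ)) := X.closed_of_finiteDimensional
  have hXm : MeasurableSet (X : Set (Fin 3 → ℝ)) := hXclosed.measurableSet
  -- every point outside X has a null ball around it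
  have hball : ∀ q ∈ (X : Set (Fin 3 → ℝ))ᶜ, ∃ ε > 0, P.E (Metric.ball q ε) = 0 := by
    intro q hq
    have hqs : q ∉ P.support := fun h => hq (hsupp h)
    simp only [PVM.support, Set.mem_setOf_eq, not_forall] at hqs
    obtain ⟨ε, hε, h⟩ := hqs
    exact ⟨ε, hε, by simpa using h⟩
  -- Xᶜ is null
  have hXc : P.E ((X : Set (Fin 3 → ℝ))ᶜ) = 0 := by
    classical
    choose! ε hεpos hεnull using hball
    set ι := ↥((X : Set (Fin 3 → ℝ))ᶜ) with hι
    set s : ι → Set (Fin 3 → ℝ) := fun i => Metric.ball (i : Fin 3 → ℝ) (ε i) with hsdef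
    obtain ⟨T, hTc, hTU⟩ := TopologicalSpace.isOpen_iUnion_countable s
      (fun i => Metric.isOpen_ball)
    have hsub : (X : Set (Fin 3 → ℝ))ᶜ ⊆ ⋃ i ∈ T, s i := by
      rw [hTU]
      intro q hq
      exact Set.mem_iUnion.mpr ⟨⟨q, hq⟩, Metric.mem_ball_self (hεpos q hq)⟩
    rcases T.eq_empty_or_nonempty with hT | hT
    · have : (X : Set (Fin 3 → ℝ))ᶜ = ∅ := by
        rw [hT] at hsub
        simpa using hsub
      rw [this, P.empty]
    · obtain ⟨f, hf⟩ := Set.Countable.exists_eq_range hTc hT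
      have hUeq : ⋃ i ∈ T, s i = ⋃ n, s (f n) := by
        rw [hf]
        ext q
        simp
      have hnull : P.E (⋃ n, s (f n)) = 0 := by
        apply P.null_iUnion
        · intro n
          exact Metric.isOpen_ball.measurableSet
        · intro n
          exact hεnull _ (f n).2
      rw [hUeq] at hsub
      exact P.null_mono hXm.compl
        (MeasurableSet.iUnion fun n => Metric.isOpen_ball.measurableSet) hsub hnull
  have hX1 : P.E (X : Set (Fin 3 → ℝ)) = 1 := P.eq_one_of_compl_null hXm hXc
  refine ⟨a, b, fun I hI => ?_⟩
  set S : Set (Fin 3 → ℝ) := {p | p 2 ∈ I} with hSdef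
  set T : Set (Fin 3 → ℝ) := {p | a * p 0 + b * p 1 ∈ I} with hTdef
  have hSm : MeasurableSet S := (measurable_pi_apply 2) hI
  have hTm : MeasurableSet T := by
    have : Measurable fun p : Fin 3 → ℝ => a * p 0 + b * p 1 :=
      by
        have h0 : Measurable fun p : Fin 3 → ℝ => p 0 := measurable_pi_apply 0
        have h1 : Measurable fun p : Fin 3 → ℝ => p 1 := measurable_pi_apply 1
        exact (h0.const_mul a).add (h1.const_mul b)
    exact this hI
  have hinter : S ∩ (X : Set (Fin 3 → ℝ)) = T ∩ (X : Set (Fin 3 → ℝ)) := by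
    ext p
    simp only [Set.mem_inter_iff, Set.mem_setOf_eq, hSdef, hTdef, SetLike.mem_coe]
    constructor
    · rintro ⟨h1, h2⟩
      exact ⟨by rwa [← hab p h2], h2⟩
    · rintro ⟨h1, h2⟩
      exact ⟨by rwa [hab p h2], h2⟩
  have hS' : P.E S = P.E (S ∩ (X : Set (Fin 3 → ℝ))) := by
    rw [← P.mul_inter S _ hSm hXm, hX1]
    ext y
    simp
  have hT' : P.E T = P.E (T ∩ (X : Set (Fin 3 → ℝ))) := by
    rw [← P.mul_inter T _ hTm hXm, hX1]
    ext y
    simp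
  rw [hS', hT', hinter]
end

section
/- Let A, B, C be pairwise strongly commuting self-adjoint operators on a Hilbert space, and let π_z : ℝ³ → ℝ² denote the orthogonal projection along the z-axis onto the x-y-plane. Then the joint spectrum of (A,B) equals the closure of the image under π_z of the joint spectrum of (A,B,C): σ_{A,B} = closure(π_z(σ_{A,B,C})). -/
open scoped InnerProductSpace

lemma PVM.E_zero_mono {α : Type*} [MeasurableSpace α] {H : Type*} [NormedAddCommGroup H]
    [InnerProductSpace ℂ H] (P : PVM α H) {S T : Set α} (hS : MeasurableSet S)
    (hT : MeasurableSet T) (hST : S ⊆ T) (h : P.E T = 0) : P.E S = 0 := by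
  have h2 := P.mul_inter T S hT hS
  rw [Set.inter_eq_self_of_subset_right hST] at h2
  rw [← h2, h, ContinuousLinearMap.zero_comp]

lemma PVM.E_iUnion_zero {α : Type*} [MeasurableSpace α] {H : Type*} [NormedAddCommGroup H]
    [InnerProductSpace ℂ H] (P : PVM α H) (s : ℕ → Set α) (hm : ∀ n, MeasurableSet (s n))
    (h : ∀ n, P.E (s n) = 0) : P.E (⋃ n, s n) = 0 := by
  set d := disjointed s with hd
  have hdm : ∀ n, MeasurableSet (d n) := MeasurableSet.disjointed hm
  have hd0 : ∀ n, P.E (d n) = 0 := fun n =>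
    P.E_zero_mono (hdm n) (hm n) (disjointed_subset s n) (h n)
  have key : ∀ x y : H, @inner ℂ H _ x (P.E (⋃ n, d n) y) = 0 := by
    intro x y
    have hsum := P.countably_additive d hdm (disjoint_disjointed s) x y
    simp only [hd0, ContinuousLinearMap.zero_apply, inner_zero_right] at hsum
    exact (hasSum_zero.unique hsum).symm
  have : P.E (⋃ n, d n) = 0 := by
    ext y
    have := key (P.E (⋃ n, d n) y) y
    rwa [inner_self_eq_zero] at this
  rwa [hd, iUnion_disjointed] at this

/-- The joint spectrum of `(A,B)` is the closure of the image of the joint spectrum of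
`(A,B,C)` under the orthogonal projection `π_z` along the `z`-axis onto the `x`-`y`-plane.
Here `P` is the joint spectral measure of the strongly commuting self-adjoint operators
`A, B, C` on `ℝ³`, and the left-hand side is the support of its `(x,y)`-marginal, i.e. the
joint spectrum of `(A,B)`. -/
theorem jointSpectrum_pair_eq_closure_proj
    {H : Type*} [NormedAddCommGroup H] [InnerProductSpace ℂ H] [CompleteSpace H]
    (P : PVM (Fin 3 → ℝ) H) :
    {q : Fin 2 → ℝ | ∀ ε > 0,
        P.E {p : Fin 3 → ℝ | (fun i : Fin 2 => p i.castSucc) ∈ Metric.ball q ε} ≠ 0}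
      = closure ((fun p : Fin 3 → ℝ => fun i : Fin 2 => p i.castSucc) '' P.support) := by

  set π : (Fin 3 → ℝ) → (Fin 2 → ℝ) := fun p => fun i : Fin 2 => p i.castSucc with hπ
  have hπc : Continuous π := continuous_pi fun i => continuous_apply _
  have hmeas : ∀ (q : Fin 2 → ℝ) (ε : ℝ),
      MeasurableSet {p : Fin 3 → ℝ | π p ∈ Metric.ball q ε} :=
    fun q ε => ((Metric.isOpen_ball.preimage hπc)).measurableSet
  apply Set.eq_of_subset_of_subset
  · -- LHS ⊆ closure
    intro q hq
    rw [Metric.mem_closure_iff]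
    intro ε hε
    by_contra hcon
    push_neg at hcon
    -- every point of the strip S is not in the support
    set S : Set (Fin 3 → ℝ) := {p : Fin 3 → ℝ | π p ∈ Metric.ball q ε} with hS
    have hbad : ∀ p : S, ∃ δ > 0, P.E (Metric.ball (p : Fin 3 → ℝ) δ) = 0 := by
      rintro ⟨p, hp⟩
      by_contra hps
      push_neg at hps
      have hpsup : (p : Fin 3 → ℝ) ∈ P.support := by
        intro δ hδ; exact hps δ hδ
      have hpd : dist (π p) q < ε := hp
      rw [dist_comm] at hpd
      exact absurd hpd (not_lt.2 (hcon (π p) ⟨p, hpsup, rfl⟩))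
    choose δ hδpos hδ0 using hbad
    set u : S → Set (Fin 3 → ℝ) := fun p => Metric.ball (p : Fin 3 → ℝ) (δ p) with hu
    have huopen : ∀ p : S, IsOpen (u p) := fun p => Metric.isOpen_ball
    obtain ⟨T, Tcount, hT⟩ := TopologicalSpace.isOpen_iUnion_countable u huopen
    have hScover : S ⊆ ⋃ i ∈ T, u i := by
      rw [hT]
      intro p hp
      exact Set.mem_iUnion.2 ⟨⟨p, hp⟩, Metric.mem_ball_self (hδpos ⟨p, hp⟩)⟩
    have hES : P.E S = 0 := by
      rcases T.eq_empty_or_nonempty with hTe | hTne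
      · have : S ⊆ (∅ : Set (Fin 3 → ℝ)) := by
          simpa [hTe] using hScover
        exact P.E_zero_mono (hmeas q ε) MeasurableSet.empty this P.empty
      · obtain ⟨f, hf⟩ := Set.Countable.exists_eq_range Tcount hTne
        have hcov2 : S ⊆ ⋃ n, u (f n) := by
          intro p hp
          have := hScover hp
          rw [hf] at this
          simpa [Set.mem_iUnion] using this
        have hU0 : P.E (⋃ n, u (f n)) = 0 :=
          P.E_iUnion_zero _ (fun n => Metric.isOpen_ball.measurableSet)
            (fun n => hδ0 (f n))
        exact P.E_zero_mono (hmeas q ε)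
          (MeasurableSet.iUnion fun n => Metric.isOpen_ball.measurableSet) hcov2 hU0
    exact hq ε hε hES
  · -- closure ⊆ LHS
    apply closure_minimal
    · rintro _ ⟨p, hp, rfl⟩ ε hε hE0
      have hsub : Metric.ball p ε ⊆ {p' : Fin 3 → ℝ | π p' ∈ Metric.ball (π p) ε} := by
        intro p' hp'
        have h1 : ∀ i : Fin 3, dist (p' i) (p i) < ε :=
          (dist_pi_lt_iff hε).1 hp'
        exact (dist_pi_lt_iff hε).2 fun i => h1 i.castSucc
      exact hp ε hε (P.E_zero_mono Metric.isOpen_ball.measurableSet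
        (hmeas (π p) ε) hsub hE0)
    · -- LHS closed
      rw [← isOpen_compl_iff]
      rw [Metric.isOpen_iff]
      intro q hq
      simp only [Set.mem_compl_iff, Set.mem_setOf_eq] at hq
      push_neg at hq
      obtain ⟨ε, hε, hE0⟩ := hq
      refine ⟨ε / 2, by linarith, ?_⟩
      intro q' hq'
      simp only [Set.mem_compl_iff, Set.mem_setOf_eq]
      push_neg
      refine ⟨ε / 2, by linarith, ?_⟩
      have hsub : {p : Fin 3 → ℝ | π p ∈ Metric.ball q' (ε / 2)}
          ⊆ {p : Fin 3 → ℝ | π p ∈ Metric.ball q ε} := by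
        intro p hp
        have : dist (π p) q ≤ dist (π p) q' + dist q' q := dist_triangle _ _ _
        have h2 : dist (π p) q' < ε / 2 := hp
        have h3 : dist q' q < ε / 2 := hq'
        simp only [Set.mem_setOf_eq, Metric.mem_ball]
        linarith
      exact P.E_zero_mono (hmeas q' (ε / 2)) (hmeas q ε) hsub hE0
end

section
/- Fix E ≥ 0 and let σ^{(E)} := {(η, k, κ) ∈ ℝ × ℝ^s × ℝ : −η(1 − e^κ) ≤ E|k|(1 + e^κ)}. If G is a subgroup of (ℝ^{s+2}, +) contained in σ^{(E)}, then the closed linear span of G is also contained in σ^{(E)}. -/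
/-- The constraint region `σ^{(E)} ⊆ ℝ × ℝ^s × ℝ` (coordinates `(η, k, κ)`) determined by
an efficiency bound `E ≥ 0`: the set of `(η,k,κ)` with `−η(1−e^κ) ≤ E·|k|·(1+e^κ)`. -/
def sigmaE (s : ℕ) (E : ℝ) : Set (ℝ × EuclideanSpace ℝ (Fin s) × ℝ) :=
  {q | -q.1 * (1 - Real.exp q.2.2) ≤ E * ‖q.2.1‖ * (1 + Real.exp q.2.2)}

/-- monotonicity of `x ↦ (e^x - 1)/(e^x + 1)`. -/
lemma auxTanh_mono {a b : ℝ} (h : a ≤ b) :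
    (Real.exp a - 1) / (Real.exp a + 1) ≤ (Real.exp b - 1) / (Real.exp b + 1) := by
  have ha : (0:ℝ) < Real.exp a + 1 := by positivity
  have hb : (0:ℝ) < Real.exp b + 1 := by positivity
  rw [div_le_div_iff₀ ha hb]
  nlinarith [Real.exp_le_exp.mpr h]

lemma mem_sigmaE_iff {s : ℕ} {E : ℝ} {q : ℝ × EuclideanSpace ℝ (Fin s) × ℝ} :
    q ∈ sigmaE s E ↔
      q.1 * ((Real.exp q.2.2 - 1) / (Real.exp q.2.2 + 1)) ≤ E * ‖q.2.1‖ := by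
  have h : (0:ℝ) < Real.exp q.2.2 + 1 := by positivity
  rw [sigmaE, Set.mem_setOf_eq, mul_div_assoc', div_le_iff₀ h]
  constructor <;> intro h' <;> nlinarith

/-- `σ^{(E)}` is star-shaped about the origin. -/
lemma smul_mem_sigmaE {s : ℕ} {E : ℝ} (hE : 0 ≤ E)
    {q : ℝ × EuclideanSpace ℝ (Fin s) × ℝ} (hq : q ∈ sigmaE s E)
    {l : ℝ} (h0 : 0 ≤ l) (h1 : l ≤ 1) : l • q ∈ sigmaE s E := by
  rw [mem_sigmaE_iff] at hq ⊢
  have hsm1 : (l • q).1 = l * q.1 := rfl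
  have hsm2 : (l • q).2.2 = l * q.2.2 := rfl
  have hn : ‖(l • q).2.1‖ = l * ‖q.2.1‖ := by
    show ‖l • q.2.1‖ = _
    rw [norm_smul, Real.norm_eq_abs, abs_of_nonneg h0]
  rw [hsm1, hsm2, hn]
  have hN : 0 ≤ E * ‖q.2.1‖ := mul_nonneg hE (norm_nonneg _)
  have ht0 : (Real.exp 0 - 1) / (Real.exp 0 + 1) = 0 := by
    rw [Real.exp_zero]; norm_num
  have key : q.1 * ((Real.exp (l * q.2.2) - 1) / (Real.exp (l * q.2.2) + 1))
      ≤ E * ‖q.2.1‖ := by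
    rcases le_total 0 q.2.2 with hk | hk
    · have hle : l * q.2.2 ≤ q.2.2 := by nlinarith
      have hge : (0:ℝ) ≤ l * q.2.2 := mul_nonneg h0 hk
      have h2 := auxTanh_mono hle
      have h3 := auxTanh_mono hge
      rw [ht0] at h3
      rcases le_total 0 q.1 with hη | hη
      · calc q.1 * ((Real.exp (l * q.2.2) - 1) / (Real.exp (l * q.2.2) + 1))
            ≤ q.1 * ((Real.exp q.2.2 - 1) / (Real.exp q.2.2 + 1)) :=
              mul_le_mul_of_nonneg_left h2 hη
          _ ≤ E * ‖q.2.1‖ := hq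
      · exact le_trans (mul_nonpos_of_nonpos_of_nonneg hη h3) hN
    · have hle : q.2.2 ≤ l * q.2.2 := by nlinarith
      have hge : l * q.2.2 ≤ 0 := mul_nonpos_of_nonneg_of_nonpos h0 hk
      have h2 := auxTanh_mono hle
      have h3 := auxTanh_mono hge
      rw [ht0] at h3
      rcases le_total 0 q.1 with hη | hη
      · exact le_trans (mul_nonpos_of_nonneg_of_nonpos hη h3) hN
      · calc q.1 * ((Real.exp (l * q.2.2) - 1) / (Real.exp (l * q.2.2) + 1))
            ≤ q.1 * ((Real.exp q.2.2 - 1) / (Real.exp q.2.2 + 1)) :=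
              mul_le_mul_of_nonpos_left h2 hη
          _ ≤ E * ‖q.2.1‖ := hq
  have hmul : l * q.1 * ((Real.exp (l * q.2.2) - 1) / (Real.exp (l * q.2.2) + 1))
      = l * (q.1 * ((Real.exp (l * q.2.2) - 1) / (Real.exp (l * q.2.2) + 1))) := by ring
  rw [hmul, mul_comm E (l * ‖q.2.1‖), mul_assoc, mul_comm ‖q.2.1‖ E]
  exact mul_le_mul_of_nonneg_left key h0

variable {V : Type*} [AddCommGroup V] [Module ℝ V]

/-- The "ℚ-divisible hull" of an additive subgroup inside a real vector space:
elements some positive natural multiple of which lies in `G`. -/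
def ratHull (G : AddSubgroup V) : AddSubgroup V where
  carrier := {x | ∃ n : ℕ, 0 < n ∧ (n : ℝ) • x ∈ G}
  zero_mem' := ⟨1, one_pos, by simpa using G.zero_mem⟩
  add_mem' := by
    rintro a b ⟨n, hn, ha⟩ ⟨m, hm, hb⟩
    refine ⟨n * m, Nat.mul_pos hn hm, ?_⟩
    have : ((n * m : ℕ) : ℝ) • (a + b)
        = (m : ℝ) • ((n : ℝ) • a) + (n : ℝ) • ((m : ℝ) • b) := by
      rw [smul_add, smul_smul, smul_smul]
      push_cast
      ring_nf
    rw [this]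
    refine AddSubgroup.add_mem G ?_ ?_
    · rw [Nat.cast_smul_eq_nsmul]
      exact AddSubgroup.nsmul_mem G ha m
    · rw [Nat.cast_smul_eq_nsmul]
      exact AddSubgroup.nsmul_mem G hb n
  neg_mem' := by
    rintro a ⟨n, hn, ha⟩
    exact ⟨n, hn, by rw [smul_neg]; exact AddSubgroup.neg_mem G ha⟩

lemma ratHull_subset (G : AddSubgroup V) :
    (G : Set V) ⊆ (ratHull G : Set V) := fun g hg => ⟨1, one_pos, by simpa using hg⟩

lemma rat_smul_mem_ratHull (G : AddSubgroup V) {x : V} (hx : x ∈ ratHull G) (q : ℚ) :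
    (q : ℝ) • x ∈ ratHull G := by
  obtain ⟨n, hn, hnx⟩ := hx
  refine ⟨q.den * n, Nat.mul_pos q.pos hn, ?_⟩
  have hden : ((q.den : ℝ)) ≠ 0 := Nat.cast_ne_zero.mpr q.den_nz
  have hcoef : ((q.den * n : ℕ) : ℝ) * (q : ℝ) = (q.num : ℝ) * (n : ℝ) := by
    rw [Rat.cast_def]
    push_cast
    field_simp
  have : ((q.den * n : ℕ) : ℝ) • ((q : ℝ) • x)
      = (q.num : ℝ) • ((n : ℝ) • x) := by
    rw [smul_smul, smul_smul, hcoef, mul_comm (q.num : ℝ) (n : ℝ)]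
  rw [this, Int.cast_smul_eq_zsmul ℝ]
  exact AddSubgroup.zsmul_mem G hnx q.num

/-- If a subgroup `G` of `(ℝ^{s+2}, +)` is contained in `σ^{(E)}`, then the closed linear
span of `G` is also contained in `σ^{(E)}`. -/
theorem closedSpan_subset_sigmaE_of_subgroup_subset (s : ℕ) (E : ℝ) (hE : 0 ≤ E)
    (G : AddSubgroup (ℝ × EuclideanSpace ℝ (Fin s) × ℝ))
    (hG : (G : Set (ℝ × EuclideanSpace ℝ (Fin s) × ℝ)) ⊆ sigmaE s E) :
    closure ((Submodule.span ℝ (G : Set (ℝ × EuclideanSpace ℝ (Fin s) × ℝ)) :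
        Submodule ℝ (ℝ × EuclideanSpace ℝ (Fin s) × ℝ)) : Set (ℝ × EuclideanSpace ℝ (Fin s) × ℝ))
      ⊆ sigmaE s E := by
  set V := ℝ × EuclideanSpace ℝ (Fin s) × ℝ
  set T : AddSubgroup V := ratHull G with hT
  -- σ^{(E)} is closed
  have hclosed : IsClosed (sigmaE s E) := by
    apply isClosed_le
    · fun_prop
    · fun_prop
  -- the hull is contained in σ^{(E)}
  have hTsub : (T : Set V) ⊆ sigmaE s E := by
    rintro x ⟨n, hn, hnx⟩
    have hx : x = ((n : ℝ))⁻¹ • ((n : ℝ) • x) := by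
      rw [inv_smul_smul₀ (by exact_mod_cast hn.ne' : (n:ℝ) ≠ 0)]
    rw [hx]
    have h0 : (0:ℝ) ≤ ((n:ℝ))⁻¹ := by positivity
    have h1 : ((n:ℝ))⁻¹ ≤ 1 := by
      rw [inv_le_one_iff₀]
      right
      exact_mod_cast hn
    exact smul_mem_sigmaE hE (hG hnx) h0 h1
  have hclT : closure (T : Set V) ⊆ sigmaE s E := closure_minimal hTsub hclosed
  -- the span is inside the closure of the hull
  have hspan : ((Submodule.span ℝ (G : Set V) : Submodule ℝ V) : Set V)
      ⊆ closure (T : Set V) := by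
    intro x hx
    induction hx using Submodule.span_induction with
    | mem g hg => exact subset_closure (ratHull_subset G hg)
    | zero => exact subset_closure T.zero_mem
    | add a b _ _ ha hb =>
      exact T.topologicalClosure.add_mem ha hb
    | smul r a _ ha =>
      rw [mem_closure_iff_seq_limit] at ha ⊢
      obtain ⟨u, hu, hulim⟩ := ha
      have hr : r ∈ closure (Set.range ((↑) : ℚ → ℝ)) := by
        rw [Rat.denseRange_cast.closure_eq]; trivial
      rw [mem_closure_iff_seq_limit] at hr
      obtain ⟨v, hv, hvlim⟩ := hr
      choose w hw using hv
      refine ⟨fun n => v n • u n, fun n => ?_, ?_⟩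
      · have hmem := rat_smul_mem_ratHull G (hu n) (w n)
        rw [hw n] at hmem
        exact hmem
      · exact hvlim.smul hulim
  exact (closure_mono hspan).trans (by
    rw [closure_closure]
    exact hclT)
end
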